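/- Let a be a real number, L > 0, and let f be of class C² on [a, a+L]. Then sup_{a ≤ x ≤ a+L} |f′(x)| ≤ (2/L)·sup_{a ≤ x ≤ a+L} |f(x)| + (L/2)·sup_{a ≤ x ≤ a+L} |f″(x)|. -/

import Mathlib

open Set

lemma taylor1_bound {f : ℝ → ℝ} {a b C x₀ x : ℝ} (hab : a < b)
    (hf : ContDiffOn ℝ 2 f (Icc a b)) (hx₀ : x₀ ∈ Icc a b) (hx : x ∈ Icc a b)
    (hC : ∀ y ∈ Icc a b, |iteratedDerivWithin 2 f (Icc a b) y| ≤ C) :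
    |f x - f x₀ - derivWithin f (Icc a b) x₀ * (x - x₀)| ≤ C * (x - x₀) ^ 2 / 2 := by
  have hC0 : 0 ≤ C := (abs_nonneg _).trans (hC x₀ hx₀)
  have hu : UniqueDiffOn ℝ (Icc a b) := uniqueDiffOn_Icc hab
  have hf' : DifferentiableOn ℝ (iteratedDerivWithin 1 f (Icc a b)) (Icc a b) :=
    hf.differentiableOn_iteratedDerivWithin (by norm_num) hu
  set F : ℝ → ℝ := fun t => taylorWithinEval f 1 (Icc a b) t x with hFdef
  set F' : ℝ → ℝ := fun t => (x - t) * iteratedDerivWithin 2 f (Icc a b) t with hF'def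
  have hF : ∀ t ∈ Icc a b, HasDerivWithinAt F (F' t) (Icc a b) t := by
    intro t ht
    have := hasDerivWithinAt_taylorWithinEval_at_Icc x hab ht
      (hf.of_le (by norm_num)) hf'
    simpa only [hF'def, Nat.factorial_one, Nat.cast_one, inv_one, one_mul, pow_one,
      smul_eq_mul] using this
  have hFc : ContinuousOn F (Icc a b) := fun t ht => (hF t ht).continuousWithinAt
  have hT : taylorWithinEval f 1 (Icc a b) x₀ x
      = f x₀ + (x - x₀) * derivWithin f (Icc a b) x₀ := by
    rw [taylor_within_apply]
    simp [Finset.sum_range_succ, iteratedDerivWithin_zero, iteratedDerivWithin_one]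
  have key : |f x - taylorWithinEval f 1 (Icc a b) x₀ x| ≤ C * (x - x₀) ^ 2 / 2 := by
    rcases le_or_gt x₀ x with h | h
    · -- rightward
      set G : ℝ → ℝ := fun t => F t - F x₀ with hGdef
      have hGc : ContinuousOn G (Icc x₀ x) :=
        (hFc.mono (Icc_subset_Icc hx₀.1 hx.2)).sub continuousOn_const
      have hG' : ∀ t ∈ Ico x₀ x, HasDerivWithinAt G (F' t) (Ici t) t := by
        intro t ht
        have htm : t ∈ Icc a b := ⟨hx₀.1.trans ht.1, ht.2.le.trans hx.2⟩
        have h1 : HasDerivWithinAt G (F' t) (Icc a b) t := (hF t htm).sub_const _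
        have h2 : HasDerivWithinAt G (F' t) (Ici t ∩ Iic b) t := by
          rw [Ici_inter_Iic]
          exact h1.mono (Icc_subset_Icc htm.1 le_rfl)
        exact (hasDerivWithinAt_inter (Iic_mem_nhds (lt_of_lt_of_le ht.2 hx.2))).mp h2
      have hB : ∀ t : ℝ, HasDerivAt (fun t => C / 2 * (x - x₀) ^ 2 - C / 2 * (x - t) ^ 2)
          (C * (x - t)) t := by
        intro t
        have h0 : HasDerivAt (fun t : ℝ => (x - t) ^ 2)
            ((2 : ℕ) * (x - t) ^ (2 - 1) * (-1)) t := ((hasDerivAt_id t).const_sub x).pow 2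
        have := (h0.const_mul (C / 2)).const_sub (C / 2 * (x - x₀) ^ 2)
        exact this.congr_deriv (by ring)
      have bound : ∀ t ∈ Ico x₀ x, ‖F' t‖ ≤ C * (x - t) := by
        intro t ht
        have htm : t ∈ Icc a b := ⟨hx₀.1.trans ht.1, ht.2.le.trans hx.2⟩
        have : |F' t| = (x - t) * |iteratedDerivWithin 2 f (Icc a b) t| := by
          rw [hF'def, abs_mul, abs_of_nonneg (by linarith [ht.2] : (0:ℝ) ≤ x - t)]
        rw [Real.norm_eq_abs, this, mul_comm C (x - t)]
        exact mul_le_mul_of_nonneg_left (hC t htm) (by linarith [ht.2])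
      have ha0 : ‖G x₀‖ ≤ C / 2 * (x - x₀) ^ 2 - C / 2 * (x - x₀) ^ 2 := by
        simp [hGdef]
      have := image_norm_le_of_norm_deriv_right_le_deriv_boundary hGc hG' ha0 hB bound
        (right_mem_Icc.2 h)
      have hGx : G x = f x - taylorWithinEval f 1 (Icc a b) x₀ x := by
        simp [hGdef, hFdef, taylorWithinEval_self]
      rw [hGx, Real.norm_eq_abs] at this
      calc |f x - taylorWithinEval f 1 (Icc a b) x₀ x|
          ≤ C / 2 * (x - x₀) ^ 2 - C / 2 * (x - x) ^ 2 := this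
        _ = C * (x - x₀) ^ 2 / 2 := by ring
    · -- leftward
      set G : ℝ → ℝ := fun t => F t - F x with hGdef
      have hGc : ContinuousOn G (Icc x x₀) :=
        (hFc.mono (Icc_subset_Icc hx.1 hx₀.2)).sub continuousOn_const
      have hG' : ∀ t ∈ Ico x x₀, HasDerivWithinAt G (F' t) (Ici t) t := by
        intro t ht
        have htm : t ∈ Icc a b := ⟨hx.1.trans ht.1, ht.2.le.trans hx₀.2⟩
        have h1 : HasDerivWithinAt G (F' t) (Icc a b) t := (hF t htm).sub_const _
        have h2 : HasDerivWithinAt G (F' t) (Ici t ∩ Iic b) t := by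
          rw [Ici_inter_Iic]
          exact h1.mono (Icc_subset_Icc htm.1 le_rfl)
        exact (hasDerivWithinAt_inter (Iic_mem_nhds (lt_of_lt_of_le ht.2 hx₀.2))).mp h2
      have hB : ∀ t : ℝ, HasDerivAt (fun t => C / 2 * (t - x) ^ 2) (C * (t - x)) t := by
        intro t
        have h0 : HasDerivAt (fun t : ℝ => (t - x) ^ 2)
            ((2 : ℕ) * (t - x) ^ (2 - 1) * 1) t := ((hasDerivAt_id t).sub_const x).pow 2
        have := h0.const_mul (C / 2)
        exact this.congr_deriv (by ring)
      have bound : ∀ t ∈ Ico x x₀, ‖F' t‖ ≤ C * (t - x) := by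
        intro t ht
        have htm : t ∈ Icc a b := ⟨hx.1.trans ht.1, ht.2.le.trans hx₀.2⟩
        have : |F' t| = (t - x) * |iteratedDerivWithin 2 f (Icc a b) t| := by
          rw [hF'def, abs_mul, abs_sub_comm, abs_of_nonneg (by linarith [ht.1] : (0:ℝ) ≤ t - x)]
        rw [Real.norm_eq_abs, this, mul_comm C (t - x)]
        exact mul_le_mul_of_nonneg_left (hC t htm) (by linarith [ht.1])
      have ha0 : ‖G x‖ ≤ C / 2 * (x - x) ^ 2 := by
        simp [hGdef]
      have := image_norm_le_of_norm_deriv_right_le_deriv_boundary hGc hG' ha0 hB bound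
        (right_mem_Icc.2 h.le)
      have hGx : G x₀ = -(f x - taylorWithinEval f 1 (Icc a b) x₀ x) := by
        simp [hGdef, hFdef, taylorWithinEval_self]
      rw [hGx, Real.norm_eq_abs, abs_neg] at this
      calc |f x - taylorWithinEval f 1 (Icc a b) x₀ x|
          ≤ C / 2 * (x₀ - x) ^ 2 := this
        _ = C * (x - x₀) ^ 2 / 2 := by ring
  rw [hT] at key
  calc |f x - f x₀ - derivWithin f (Icc a b) x₀ * (x - x₀)|
      = |f x - (f x₀ + (x - x₀) * derivWithin f (Icc a b) x₀)| := by ring_nf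
    _ ≤ C * (x - x₀) ^ 2 / 2 := key

theorem stmt_9 (a L : ℝ) (hL : 0 < L)
    (f : ℝ → ℝ) (hf : ContDiffOn ℝ 2 f (Set.Icc a (a + L))) :
    (⨆ x : Set.Icc a (a + L), |derivWithin f (Set.Icc a (a + L)) x|) ≤
      (2 / L) * (⨆ x : Set.Icc a (a + L), |f x|)
      + (L / 2) * (⨆ x : Set.Icc a (a + L), |iteratedDerivWithin 2 f (Set.Icc a (a + L)) x|) := by
  have hab : a < a + L := by linarith
  haveI hne : Nonempty ↥(Icc a (a + L)) := ⟨⟨a, left_mem_Icc.2 hab.le⟩⟩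
  set M0 : ℝ := ⨆ x : Set.Icc a (a + L), |f x| with hM0def
  set M2 : ℝ := ⨆ x : Set.Icc a (a + L), |iteratedDerivWithin 2 f (Set.Icc a (a + L)) x|
    with hM2def
  have bdd0 : BddAbove (Set.range fun x : Set.Icc a (a + L) => |f x|) := by
    have := (isCompact_Icc.image_of_continuousOn hf.continuousOn.abs).bddAbove
    rwa [Set.image_eq_range] at this
  have bdd2 : BddAbove (Set.range fun x : Set.Icc a (a + L) =>
      |iteratedDerivWithin 2 f (Set.Icc a (a + L)) x|) := by
    have := (isCompact_Icc.image_of_continuousOn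
      ((hf.continuousOn_iteratedDerivWithin le_rfl (uniqueDiffOn_Icc hab)).abs)).bddAbove
    rwa [Set.image_eq_range] at this
  have hM0 : ∀ y ∈ Icc a (a + L), |f y| ≤ M0 := fun y hy => le_ciSup bdd0 ⟨y, hy⟩
  have hM2 : ∀ y ∈ Icc a (a + L), |iteratedDerivWithin 2 f (Icc a (a + L)) y| ≤ M2 :=
    fun y hy => le_ciSup bdd2 ⟨y, hy⟩
  refine ciSup_le fun ⟨x, hx⟩ => ?_
  set D : ℝ := derivWithin f (Icc a (a + L)) x with hDdef
  have hM2nn : 0 ≤ M2 := (abs_nonneg _).trans (hM2 x hx)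
  have h1 := taylor1_bound hab hf hx (right_mem_Icc.2 hab.le) hM2
  have h2 := taylor1_bound hab hf hx (left_mem_Icc.2 hab.le) hM2
  set r1 : ℝ := f (a + L) - f x - D * ((a + L) - x) with hr1
  set r2 : ℝ := f a - f x - D * (a - x) with hr2
  have h4 : |D| * L ≤ 2 * M0 + M2 * (((a + L) - x) ^ 2 + (a - x) ^ 2) / 2 := by
    have e1 : |D| * L = |D * L| := by rw [abs_mul, abs_of_pos hL]
    have e : |D| * L = |(f (a + L) - f a) - (r1 - r2)| := by
      rw [e1]
      congr 1
      rw [hr1, hr2]; ring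
    calc |D| * L = |(f (a + L) - f a) - (r1 - r2)| := e
      _ ≤ |f (a + L) - f a| + |r1 - r2| := abs_sub _ _
      _ ≤ (|f (a + L)| + |f a|) + (|r1| + |r2|) := add_le_add (abs_sub _ _) (abs_sub _ _)
      _ ≤ (M0 + M0) + (M2 * ((a + L) - x) ^ 2 / 2 + M2 * (a - x) ^ 2 / 2) := by
          gcongr <;>
            first
              | exact hM0 _ (right_mem_Icc.2 hab.le)
              | exact hM0 _ (left_mem_Icc.2 hab.le)
      _ = 2 * M0 + M2 * (((a + L) - x) ^ 2 + (a - x) ^ 2) / 2 := by ring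
  have hsq : ((a + L) - x) ^ 2 + (a - x) ^ 2 ≤ L ^ 2 := by
    nlinarith [mul_nonneg (sub_nonneg.2 hx.2) (sub_nonneg.2 hx.1)]
  rw [← mul_le_mul_iff_of_pos_right hL]
  have expand : (2 / L * M0 + L / 2 * M2) * L = 2 * M0 + M2 * L ^ 2 / 2 := by
    field_simp
  rw [expand]
  nlinarith [h4, hsq, hM2nn]
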